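/- (Supermartingale convergence theorem.) Let M be a supermartingale in an imprecise probability tree that is bounded below (there is a real B with M(s) ≥ B for all situations s). Then M converges strictly almost surely to a real variable: the event {ω ∈ Ω : the sequence (M(ω^n))_{n∈ℕ} does not converge to a limit in ℝ} is strictly null. -/

import Mathlib

open Filter Topology

namespace IP

/-- A situation of length `n`: a tuple of the first `n` states. -/
abbrev Sit (𝒳 : ℕ → Type) (n : ℕ) := (i : Fin n) → 𝒳 i

/-- A path: an infinite sequence of states. -/
abbrev Path (𝒳 : ℕ → Type) := (i : ℕ) → 𝒳 i

/-- The initial segment `ω^n` of a path. -/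
def res {𝒳 : ℕ → Type} (ω : Path 𝒳) (n : ℕ) : Sit 𝒳 n := fun i => ω i

/-- The initial (empty) situation `□`. -/
def emptySit {𝒳 : ℕ → Type} : Sit 𝒳 0 := fun i => i.elim0

/-- Append a next state to a situation. -/
def snoc {𝒳 : ℕ → Type} {n : ℕ} (s : Sit 𝒳 n) (x : 𝒳 n) : Sit 𝒳 (n + 1) := fun i =>
  if h : (i : ℕ) < n then s ⟨i, h⟩
  else cast (congrArg 𝒳 (Nat.le_antisymm (Nat.le_of_not_lt h) (Nat.lt_succ_iff.mp i.isLt))) x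

/-- Truncate a situation of length `n` to its first `k` states. -/
def trunc {𝒳 : ℕ → Type} {n : ℕ} (s : Sit 𝒳 n) (k : ℕ) (h : k ≤ n) : Sit 𝒳 k :=
  fun i => s ⟨i, lt_of_lt_of_le i.isLt h⟩

/-- A (coherent) lower expectation on a nonempty finite set. -/
def IsLE {Y : Type} [Fintype Y] [Nonempty Y] (E : (Y → ℝ) → ℝ) : Prop :=
  (∀ f : Y → ℝ, (⨅ y, f y) ≤ E f) ∧
  (∀ f g : Y → ℝ, E f + E g ≤ E (fun y => f y + g y)) ∧
  (∀ (f : Y → ℝ) (c : ℝ), 0 ≤ c → E (fun y => c * f y) = c * E f)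

/-- Submartingale w.r.t. the local models `Q` of an imprecise probability tree. -/
def IsSubmartingale {𝒳 : ℕ → Type} (Q : ∀ n, Sit 𝒳 n → (𝒳 n → ℝ) → ℝ)
    (F : ∀ n, Sit 𝒳 n → ℝ) : Prop :=
  ∀ (n : ℕ) (s : Sit 𝒳 n), 0 ≤ Q n s (fun x => F (n + 1) (snoc s x) - F n s)

/-- Supermartingale: `-F` is a submartingale. -/
def IsSupermartingale {𝒳 : ℕ → Type} (Q : ∀ n, Sit 𝒳 n → (𝒳 n → ℝ) → ℝ)
    (F : ∀ n, Sit 𝒳 n → ℝ) : Prop :=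
  IsSubmartingale Q (fun n s => -F n s)

/-- A test supermartingale: nonnegative, starting at 1. -/
def IsTestSupermartingale {𝒳 : ℕ → Type} (Q : ∀ n, Sit 𝒳 n → (𝒳 n → ℝ) → ℝ)
    (F : ∀ n, Sit 𝒳 n → ℝ) : Prop :=
  IsSupermartingale Q F ∧ (∀ n s, 0 ≤ F n s) ∧ F 0 emptySit = 1

/-- An event is strictly null if some test supermartingale converges to `+∞` on it. -/
def StrictlyNull {𝒳 : ℕ → Type} (Q : ∀ n, Sit 𝒳 n → (𝒳 n → ℝ) → ℝ)
    (A : Set (Path 𝒳)) : Prop :=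
  ∃ F : ∀ n, Sit 𝒳 n → ℝ, IsTestSupermartingale Q F ∧
    ∀ ω ∈ A, Tendsto (fun n => F n (res ω n)) atTop atTop

/-- `limsup_n F(ω^n)` as an extended real. -/
noncomputable def pathLimsup {𝒳 : ℕ → Type} (F : ∀ n, Sit 𝒳 n → ℝ) (ω : Path 𝒳) : EReal :=
  Filter.limsup (fun n => (F n (res ω n) : EReal)) atTop

/-- `liminf_n F(ω^n)` as an extended real. -/
noncomputable def pathLiminf {𝒳 : ℕ → Type} (F : ∀ n, Sit 𝒳 n → ℝ) (ω : Path 𝒳) : EReal :=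
  Filter.liminf (fun n => (F n (res ω n) : EReal)) atTop

/-- A real process bounded above. -/
def BddAbv {𝒳 : ℕ → Type} (F : ∀ n, Sit 𝒳 n → ℝ) : Prop := ∃ B : ℝ, ∀ n s, F n s ≤ B

/-- A real process bounded below. -/
def BddBlw {𝒳 : ℕ → Type} (F : ∀ n, Sit 𝒳 n → ℝ) : Prop := ∃ B : ℝ, ∀ n s, B ≤ F n s

/-- Conditional global lower expectation `E(f|s)` of an extended real variable. -/
noncomputable def lexp {𝒳 : ℕ → Type} (Q : ∀ n, Sit 𝒳 n → (𝒳 n → ℝ) → ℝ) {n : ℕ}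
    (s : Sit 𝒳 n) (f : Path 𝒳 → EReal) : EReal :=
  sSup ((fun F : ∀ k, Sit 𝒳 k → ℝ => (F n s : EReal)) ''
    {F : ∀ k, Sit 𝒳 k → ℝ | IsSubmartingale Q F ∧ BddAbv F ∧
      ∀ ω : Path 𝒳, res ω n = s → pathLimsup F ω ≤ f ω})

/-- Conditional global upper expectation `Ē(f|s)`. -/
noncomputable def uexp {𝒳 : ℕ → Type} (Q : ∀ n, Sit 𝒳 n → (𝒳 n → ℝ) → ℝ) {n : ℕ}
    (s : Sit 𝒳 n) (f : Path 𝒳 → EReal) : EReal :=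
  - lexp Q s (fun ω => - f ω)

/-- The local models of a (time-homogeneous) imprecise Markov chain with initial model `E1`
and transition models `QT`. -/
def markovQ {X : Type} (E1 : (X → ℝ) → ℝ) (QT : X → (X → ℝ) → ℝ) :
    ∀ n, Sit (fun _ => X) n → (X → ℝ) → ℝ
  | 0, _ => E1
  | n + 1, s => QT (s ⟨n, Nat.lt_succ_self n⟩)

/-- Prefix a path with a situation (fixed state space). -/
def prependX {X : Type} {n : ℕ} (s : Sit (fun _ => X) n) (ω : ℕ → X) : ℕ → X :=
  fun i => if h : i < n then s ⟨i, h⟩ else ω (i - n)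

/-- Extension of a lower transition operator to extended real maps. -/
noncomputable def Text {X : Type} (T : (X → ℝ) → X → ℝ) (g : X → EReal) : X → EReal :=
  fun x => sSup ((fun h : X → ℝ => (T h x : EReal)) '' {h : X → ℝ | ∀ y, (h y : EReal) ≤ g y})

/-- The variation (semi)norm `max h - min h`. -/
noncomputable def varnorm {X : Type} [Fintype X] [Nonempty X] (h : X → ℝ) : ℝ :=
  (⨆ x, h x) - ⨅ x, h x

/-- The (weak) coefficient of ergodicity of a lower transition operator. -/
noncomputable def coeff {X : Type} [Fintype X] [Nonempty X] (S : (X → ℝ) → X → ℝ) : ℝ :=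
  sSup {v : ℝ | ∃ h : X → ℝ, (∀ x, 0 ≤ h x ∧ h x ≤ 1) ∧ v = varnorm (S h)}

/-- Extend a situation to a path, arbitrarily. -/
noncomputable def extend {𝒳 : ℕ → Type} [∀ k, Nonempty (𝒳 k)] {n : ℕ} (t : Sit 𝒳 n) :
    Path 𝒳 :=
  fun i => if h : i < n then t ⟨i, h⟩ else Classical.arbitrary (𝒳 i)


/-! ### Auxiliary machinery for the supermartingale convergence theorem -/

section SMC

variable {𝒳 : ℕ → Type}

theorem trunc_snoc {n : ℕ} (s : Sit 𝒳 n) (x : 𝒳 n) :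
    trunc (snoc s x) n (Nat.le_succ n) = s := by
  funext i
  show snoc s x ⟨(i : ℕ), _⟩ = s i
  unfold snoc
  rw [dif_pos i.isLt]

open scoped Classical in
/-- One step of the upcrossing betting machine.  State: (capital, stake, stopped). -/
noncomputable def machStep (B a b thr : ℝ) (d : ℕ) (n : ℕ) (st : ℝ × ℝ × Bool)
    (uo v : ℝ) : ℝ × ℝ × Bool :=
  if st.2.2 then (st.1 + st.2.1 * (v - uo), 0, true)
  else if n + 1 < d then (st.1 + st.2.1 * (v - uo), 0, false)
  else if thr ≤ st.1 + st.2.1 * (v - uo) then (st.1 + st.2.1 * (v - uo), 0, true)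
  else if 0 < st.2.1 then
    (if b ≤ v then (st.1 + st.2.1 * (v - uo), 0, false)
     else (st.1 + st.2.1 * (v - uo), st.2.1, false))
  else if v ≤ a then
    (st.1 + st.2.1 * (v - uo), (st.1 + st.2.1 * (v - uo)) / (a - B), false)
  else (st.1 + st.2.1 * (v - uo), 0, false)

theorem machStep_fst (B a b thr : ℝ) (d n : ℕ) (st : ℝ × ℝ × Bool) (uo v : ℝ) :
    (machStep B a b thr d n st uo v).1 = st.1 + st.2.1 * (v - uo) := by
  unfold machStep; split_ifs <;> rfl

/-- The upcrossing machine as a process on situations. -/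
noncomputable def mach (M : ∀ n, Sit 𝒳 n → ℝ) (B a b thr : ℝ) (d : ℕ) :
    ∀ n, Sit 𝒳 n → ℝ × ℝ × Bool
  | 0, _ => (1, 0, false)
  | n + 1, s =>
      machStep B a b thr d n (mach M B a b thr d n (trunc s n (Nat.le_succ n)))
        (M n (trunc s n (Nat.le_succ n))) (M (n + 1) s)

/-- The upcrossing machine run on a plain real sequence. -/
noncomputable def pmach (B a b thr : ℝ) (d : ℕ) (u : ℕ → ℝ) : ℕ → ℝ × ℝ × Bool
  | 0 => (1, 0, false)
  | n + 1 => machStep B a b thr d n (pmach B a b thr d u n) (u n) (u (n + 1))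

theorem mach_res (M : ∀ n, Sit 𝒳 n → ℝ) (B a b thr : ℝ) (d : ℕ) (ω : Path 𝒳) :
    ∀ n, mach M B a b thr d n (res ω n) = pmach B a b thr d (fun k => M k (res ω k)) n
  | 0 => rfl
  | n + 1 => by
      have ht : trunc (res ω (n + 1)) n (Nat.le_succ n) = res ω n := rfl
      show machStep B a b thr d n
          (mach M B a b thr d n (trunc (res ω (n + 1)) n (Nat.le_succ n)))
          (M n (trunc (res ω (n + 1)) n (Nat.le_succ n))) (M (n + 1) (res ω (n + 1))) = _
      rw [ht, mach_res M B a b thr d ω n]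
      rfl

theorem mach_inv (M : ∀ n, Sit 𝒳 n → ℝ) (B a b thr : ℝ) (d : ℕ)
    (hB : ∀ n s, B ≤ M n s) (hBa : B < a) :
    ∀ n (s : Sit 𝒳 n),
      0 ≤ (mach M B a b thr d n s).2.1 ∧
      (mach M B a b thr d n s).2.1 * (M n s - B) ≤ (mach M B a b thr d n s).1
  | 0, s => by simp [mach]
  | n + 1, s => by
      obtain ⟨ih1, ih2⟩ := mach_inv M B a b thr d hB hBa n (trunc s n (Nat.le_succ n))
      have hu : B ≤ M n (trunc s n (Nat.le_succ n)) := hB n _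
      have hv : B ≤ M (n + 1) s := hB (n + 1) s
      set K := (mach M B a b thr d n (trunc s n (Nat.le_succ n))).1 with hKdef
      set h := (mach M B a b thr d n (trunc s n (Nat.le_succ n))).2.1 with hhdef
      have hK' : 0 ≤ K + h * (M (n + 1) s - M n (trunc s n (Nat.le_succ n))) := by nlinarith
      show 0 ≤ (machStep B a b thr d n _ _ _).2.1 ∧
        (machStep B a b thr d n _ _ _).2.1 * (M (n + 1) s - B) ≤
          (machStep B a b thr d n _ _ _).1
      unfold machStep
      split_ifs with h1 h2 h3 h4 h5 h6
      · exact ⟨le_refl 0, by simpa using hK'⟩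
      · exact ⟨le_refl 0, by simpa using hK'⟩
      · exact ⟨le_refl 0, by simpa using hK'⟩
      · exact ⟨le_refl 0, by simpa using hK'⟩
      · refine ⟨ih1, ?_⟩
        show h * (M (n + 1) s - B) ≤ K + h * (M (n + 1) s - M n (trunc s n (Nat.le_succ n)))
        nlinarith
      · have hd0 : (0:ℝ) < a - B := by linarith
        refine ⟨div_nonneg hK' hd0.le, ?_⟩
        show (K + h * _) / (a - B) * (M (n + 1) s - B) ≤ K + h * _
        calc (K + h * (M (n+1) s - M n (trunc s n (Nat.le_succ n)))) / (a - B) * (M (n + 1) s - B)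
            ≤ (K + h * (M (n+1) s - M n (trunc s n (Nat.le_succ n)))) / (a - B) * (a - B) := by
              apply mul_le_mul_of_nonneg_left (by linarith) (div_nonneg hK' hd0.le)
          _ = K + h * (M (n+1) s - M n (trunc s n (Nat.le_succ n))) := by
              field_simp
      · exact ⟨le_refl 0, by simpa using hK'⟩

theorem mach_fst_nonneg (M : ∀ n, Sit 𝒳 n → ℝ) (B a b thr : ℝ) (d : ℕ)
    (hB : ∀ n s, B ≤ M n s) (hBa : B < a) (n : ℕ) (s : Sit 𝒳 n) :
    0 ≤ (mach M B a b thr d n s).1 := by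
  obtain ⟨h1, h2⟩ := mach_inv M B a b thr d hB hBa n s
  nlinarith [hB n s]

theorem mach_lt_delay (M : ∀ n, Sit 𝒳 n → ℝ) (B a b thr : ℝ) (d : ℕ) :
    ∀ n (s : Sit 𝒳 n), n < d → mach M B a b thr d n s = (1, 0, false)
  | 0, s, _ => rfl
  | n + 1, s, hn => by
      show machStep B a b thr d n _ _ _ = _
      rw [mach_lt_delay M B a b thr d n _ (by omega)]
      unfold machStep
      norm_num [hn]

theorem mach_fst_le_delay (M : ∀ n, Sit 𝒳 n → ℝ) (B a b thr : ℝ) (d : ℕ)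
    (n : ℕ) (s : Sit 𝒳 n) (hn : n ≤ d) : (mach M B a b thr d n s).1 = 1 := by
  cases n with
  | zero => rfl
  | succ n =>
      show (machStep B a b thr d n _ _ _).1 = 1
      rw [machStep_fst, mach_lt_delay M B a b thr d n _ (by omega)]
      norm_num


theorem pmach_done (B a b thr : ℝ) (d : ℕ) (u : ℕ → ℝ) :
    ∀ n, (pmach B a b thr d u n).2.2 = true →
      (pmach B a b thr d u n).2.1 = 0 ∧ thr ≤ (pmach B a b thr d u n).1
  | 0 => by simp [pmach]
  | n + 1 => by
      intro hdn
      have ih := pmach_done B a b thr d u n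
      have hrec : pmach B a b thr d u (n + 1)
          = machStep B a b thr d n (pmach B a b thr d u n) (u n) (u (n + 1)) := rfl
      rw [hrec] at hdn ⊢
      unfold machStep at hdn ⊢
      by_cases h1 : (pmach B a b thr d u n).2.2
      · rw [if_pos h1] at hdn ⊢
        obtain ⟨e1, e2⟩ := ih h1
        refine ⟨rfl, ?_⟩
        show thr ≤ (pmach B a b thr d u n).1 + (pmach B a b thr d u n).2.1 * _
        rw [e1]; linarith
      · rw [if_neg h1] at hdn ⊢
        by_cases h2 : n + 1 < d
        · rw [if_pos h2] at hdn; simp at hdn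
        · rw [if_neg h2] at hdn ⊢
          by_cases h3 : thr ≤ (pmach B a b thr d u n).1 +
              (pmach B a b thr d u n).2.1 * (u (n + 1) - u n)
          · rw [if_pos h3]
            exact ⟨rfl, h3⟩
          · rw [if_neg h3] at hdn
            split_ifs at hdn <;> simp_all

theorem pmach_growth (B a b thr : ℝ) (d : ℕ) (u : ℕ → ℝ)
    (hBa : B < a) (hab : a < b) (hthr : 1 < thr) (hd : 1 ≤ d)
    (hfa : ∃ᶠ n in atTop, u n < a) (hfb : ∃ᶠ n in atTop, b < u n) :
    ∀ᶠ n in atTop, thr ≤ (pmach B a b thr d u n).1 := by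
  classical
  set st : ℕ → ℝ × ℝ × Bool := fun n => pmach B a b thr d u n with hstdef
  have hrec : ∀ n, st (n + 1) = machStep B a b thr d n (st n) (u n) (u (n + 1)) :=
    fun n => rfl
  by_cases hdone : ∃ n, (st n).2.2 = true
  · obtain ⟨n₀, h0⟩ := hdone
    have habs : ∀ k, (st (n₀ + k)).2.2 = true ∧ thr ≤ (st (n₀ + k)).1 := by
      intro k
      induction k with
      | zero => exact ⟨h0, (pmach_done B a b thr d u n₀ h0).2⟩
      | succ k ih =>
        have hh := pmach_done B a b thr d u (n₀ + k) ih.1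
        have : st (n₀ + (k + 1)) = machStep B a b thr d (n₀ + k) (st (n₀ + k))
            (u (n₀ + k)) (u (n₀ + k + 1)) := hrec (n₀ + k)
        rw [this]
        unfold machStep
        rw [if_pos ih.1]
        refine ⟨rfl, ?_⟩
        show thr ≤ (st (n₀ + k)).1 + (st (n₀ + k)).2.1 * _
        rw [hh.1]; linarith [ih.2]
    filter_upwards [eventually_ge_atTop n₀] with m hm
    obtain ⟨k, rfl⟩ := Nat.exists_eq_add_of_le hm
    exact (habs k).2
  · exfalso
    have hnd : ∀ n, (st n).2.2 = false := by
      intro n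
      have := not_exists.mp hdone n
      simpa using this
    have hdel : ∀ n, n < d → st n = (1, 0, false) := by
      intro n hn
      induction n with
      | zero => rfl
      | succ n ih =>
        rw [hrec n, ih (by omega)]
        unfold machStep
        norm_num [hn]
    -- capital always stays below the threshold
    have hKlt : ∀ n, (st n).1 < thr := by
      intro n
      cases n with
      | zero => exact hthr
      | succ m =>
        by_cases hdm : m + 1 < d
        · rw [hdel (m + 1) hdm]; exact hthr
        · by_cases hc : thr ≤ (st m).1 + (st m).2.1 * (u (m + 1) - u m)
          · exfalso
            have hf := hnd (m + 1)
            rw [hrec m] at hf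
            unfold machStep at hf
            rw [if_neg (by rw [hnd m]; simp), if_neg hdm, if_pos hc] at hf
            simp at hf
          · rw [hrec m, machStep_fst]; linarith
    -- the stopping check never fires
    have hno_stop : ∀ m, ¬ (m + 1 < d) →
        ¬ thr ≤ (st m).1 + (st m).2.1 * (u (m + 1) - u m) := by
      intro m hdm hc
      have hf := hnd (m + 1)
      rw [hrec m] at hf
      unfold machStep at hf
      rw [if_neg (by rw [hnd m]; simp), if_neg hdm, if_pos hc] at hf
      simp at hf
    -- single step when out of the market and the price stays high
    have hstep_out : ∀ m, (st m).2.1 = 0 → a < u (m + 1) →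
        (st (m + 1)).1 = (st m).1 ∧ (st (m + 1)).2.1 = 0 := by
      intro m h0 hgt
      rw [hrec m]
      unfold machStep
      have hK' : (st m).1 + (st m).2.1 * (u (m + 1) - u m) = (st m).1 := by
        rw [h0]; ring
      split_ifs with h1 h2 h3 h4 h5 h6
      · exact ⟨hK', rfl⟩
      · exact ⟨hK', rfl⟩
      · exact ⟨hK', rfl⟩
      · exact ⟨hK', rfl⟩
      · exact absurd h4 (by rw [h0]; simp)
      · exact absurd h6 (by push_neg; exact hgt)
      · exact ⟨hK', rfl⟩
    -- entry step
    have hstep_entry : ∀ m, ¬ (m + 1 < d) → (st m).2.1 = 0 → u (m + 1) ≤ a →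
        (st (m + 1)).1 = (st m).1 ∧ (st (m + 1)).2.1 = (st m).1 / (a - B) := by
      intro m hdm h0 hle
      have hK' : (st m).1 + (st m).2.1 * (u (m + 1) - u m) = (st m).1 := by
        rw [h0]; ring
      have hns := hno_stop m hdm
      rw [hrec m]
      unfold machStep
      rw [if_neg (by rw [hnd m]; simp), if_neg hdm, if_neg hns,
        if_neg (by rw [h0]; simp), if_pos hle]
      exact ⟨hK', by rw [hK']⟩
    -- step while in the market, price stays below b
    have hstep_in : ∀ m, ¬ (m + 1 < d) → 0 < (st m).2.1 → u (m + 1) < b →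
        (st (m + 1)).1 = (st m).1 + (st m).2.1 * (u (m + 1) - u m) ∧
        (st (m + 1)).2.1 = (st m).2.1 := by
      intro m hdm hpos hlt
      have hns := hno_stop m hdm
      rw [hrec m]
      unfold machStep
      rw [if_neg (by rw [hnd m]; simp), if_neg hdm, if_neg hns, if_pos hpos,
        if_neg (not_le.mpr hlt)]
      exact ⟨rfl, rfl⟩
    -- exit step
    have hstep_exit : ∀ m, ¬ (m + 1 < d) → 0 < (st m).2.1 → b ≤ u (m + 1) →
        (st (m + 1)).1 = (st m).1 + (st m).2.1 * (u (m + 1) - u m) ∧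
        (st (m + 1)).2.1 = 0 := by
      intro m hdm hpos hge
      have hns := hno_stop m hdm
      rw [hrec m]
      unfold machStep
      rw [if_neg (by rw [hnd m]; simp), if_neg hdm, if_neg hns, if_pos hpos, if_pos hge]
      exact ⟨rfl, rfl⟩
    set c : ℝ := (b - B) / (a - B) with hcdef
    have haB : (0:ℝ) < a - B := by linarith
    have hc1 : 1 < c := by
      rw [hcdef, lt_div_iff₀ haB]; linarith
    have hgrow : ∀ i : ℕ, ∃ n, d - 1 ≤ n ∧ (st n).2.1 = 0 ∧ c ^ i ≤ (st n).1 := by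
      intro i
      induction i with
      | zero =>
        refine ⟨d - 1, le_refl _, ?_, ?_⟩
        · rw [hdel (d - 1) (by omega)]
        · rw [hdel (d - 1) (by omega), pow_zero]
      | succ i ih =>
        obtain ⟨n₀, hn₀d, h0, hK⟩ := ih
        have hcpos : (0:ℝ) < c := lt_trans one_pos hc1
        have hKpos : 0 < (st n₀).1 := lt_of_lt_of_le (pow_pos hcpos i) hK
        -- find the entry time j₁
        have hex : ∃ j, n₀ < j ∧ u j ≤ a := by
          obtain ⟨j, hj1, hj2⟩ := (frequently_atTop.mp hfa) (n₀ + 1)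
          exact ⟨j, by omega, le_of_lt hj2⟩
        set j₁ := Nat.find hex with hj₁def
        obtain ⟨hj₁n, hj₁a⟩ := Nat.find_spec hex
        have hmin : ∀ m, m < j₁ → n₀ < m → a < u m := by
          intro m hm hn
          have := Nat.find_min hex hm
          push_neg at this
          exact this hn
        -- out of the market up to j₁ - 1
        have h_out : ∀ k, n₀ + k < j₁ → (st (n₀ + k)).1 = (st n₀).1 ∧ (st (n₀ + k)).2.1 = 0 := by
          intro k
          induction k with
          | zero => exact fun _ => ⟨rfl, h0⟩
          | succ k ihk =>
            intro hlt
            have hk : n₀ + k < j₁ := by omega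
            obtain ⟨e1, e2⟩ := ihk hk
            have hgt : a < u (n₀ + k + 1) := hmin _ (by omega) (by omega)
            obtain ⟨f1, f2⟩ := hstep_out (n₀ + k) e2 hgt
            exact ⟨by rw [show n₀ + (k+1) = n₀ + k + 1 from rfl, f1, e1],
              by rw [show n₀ + (k+1) = n₀ + k + 1 from rfl, f2]⟩
        have hj₁pos : 1 ≤ j₁ := by omega
        have hprev : (st (j₁ - 1)).1 = (st n₀).1 ∧ (st (j₁ - 1)).2.1 = 0 := by
          have : j₁ - 1 = n₀ + (j₁ - 1 - n₀) := by omega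
          rw [this]
          exact h_out _ (by omega)
        have hjd : ¬ (j₁ < d) := by omega
        have hentry := hstep_entry (j₁ - 1) (by omega) hprev.2 (by rw [show j₁ - 1 + 1 = j₁ by omega]; exact hj₁a)
        rw [show j₁ - 1 + 1 = j₁ by omega] at hentry
        have hstj₁1 : (st j₁).1 = (st n₀).1 := by rw [hentry.1, hprev.1]
        have hstj₁2 : (st j₁).2.1 = (st n₀).1 / (a - B) := by rw [hentry.2, hprev.1]
        have hhpos : 0 < (st j₁).2.1 := by rw [hstj₁2]; exact div_pos hKpos haB
        -- find the exit time j₂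
        have hex2 : ∃ j, j₁ < j ∧ b ≤ u j := by
          obtain ⟨j, hj1, hj2⟩ := (frequently_atTop.mp hfb) (j₁ + 1)
          exact ⟨j, by omega, le_of_lt hj2⟩
        set j₂ := Nat.find hex2 with hj₂def
        obtain ⟨hj₂n, hj₂b⟩ := Nat.find_spec hex2
        have hmin2 : ∀ m, m < j₂ → j₁ < m → u m < b := by
          intro m hm hn
          have := Nat.find_min hex2 hm
          push_neg at this
          exact this hn
        have h_in : ∀ k, j₁ + k < j₂ →
            (st (j₁ + k)).1 = (st j₁).1 + (st j₁).2.1 * (u (j₁ + k) - u j₁) ∧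
            (st (j₁ + k)).2.1 = (st j₁).2.1 := by
          intro k
          induction k with
          | zero => exact fun _ => ⟨by simp, rfl⟩
          | succ k ihk =>
            intro hlt
            have hk : j₁ + k < j₂ := by omega
            obtain ⟨e1, e2⟩ := ihk hk
            have hub : u (j₁ + k + 1) < b := hmin2 _ (by omega) (by omega)
            have hdk : ¬ (j₁ + k + 1 < d) := by omega
            obtain ⟨f1, f2⟩ := hstep_in (j₁ + k) hdk (by rw [e2]; exact hhpos) hub
            constructor
            · rw [show j₁ + (k+1) = j₁ + k + 1 from rfl, f1, e1, e2]; ring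
            · rw [show j₁ + (k+1) = j₁ + k + 1 from rfl, f2, e2]
        have hprev2 : (st (j₂ - 1)).1 = (st j₁).1 + (st j₁).2.1 * (u (j₂ - 1) - u j₁) ∧
            (st (j₂ - 1)).2.1 = (st j₁).2.1 := by
          have : j₂ - 1 = j₁ + (j₂ - 1 - j₁) := by omega
          rw [this]
          exact h_in _ (by omega)
        have hexit := hstep_exit (j₂ - 1) (by omega) (by rw [hprev2.2]; exact hhpos)
          (by rw [show j₂ - 1 + 1 = j₂ by omega]; exact hj₂b)
        rw [show j₂ - 1 + 1 = j₂ by omega] at hexit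
        refine ⟨j₂, by omega, hexit.2, ?_⟩
        have hKj₂ : (st j₂).1 = (st n₀).1 + (st n₀).1 / (a - B) * (u j₂ - u j₁) := by
          rw [hexit.1, hprev2.1, hprev2.2, hstj₁1, hstj₁2]; ring
        have hu1 : u j₁ ≤ a := hj₁a
        have hu2 : b ≤ u j₂ := hj₂b
        have hstep_ge : (st n₀).1 * c ≤ (st j₂).1 := by
          rw [hKj₂, hcdef]
          have key : (st n₀).1 + (st n₀).1 / (a - B) * (u j₂ - u j₁) -
              (st n₀).1 * ((b - B) / (a - B)) =
              (st n₀).1 / (a - B) * ((u j₂ - u j₁) - (b - a)) := by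
            field_simp
            ring
          have hge : (0:ℝ) ≤ (st n₀).1 / (a - B) * ((u j₂ - u j₁) - (b - a)) :=
            mul_nonneg (div_nonneg hKpos.le haB.le) (by linarith)
          linarith
        calc c ^ (i + 1) = c ^ i * c := by rw [pow_succ]
          _ ≤ (st n₀).1 * c := mul_le_mul_of_nonneg_right hK hcpos.le
          _ ≤ (st j₂).1 := hstep_ge
    obtain ⟨i, hi⟩ := pow_unbounded_of_one_lt thr hc1
    obtain ⟨n, -, -, hn⟩ := hgrow i
    exact absurd (hKlt n) (not_lt.mpr (le_trans hi.le hn))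
/-- The `j`-th pair of rational levels (each pair occurs for infinitely many `j`). -/
noncomputable def qpair (j : ℕ) : ℚ × ℚ := (Denumerable.eqv (ℚ × ℚ)).symm (Nat.unpair j).1

open scoped Classical in
/-- Capital of the `j`-th component machine (threshold `2^(j+2)`, delay `j+1`). -/
noncomputable def Kp (M : ∀ n, Sit 𝒳 n → ℝ) (B : ℝ) (j n : ℕ) (s : Sit 𝒳 n) : ℝ :=
  if B < ((qpair j).1 : ℝ) ∧ ((qpair j).1 : ℝ) < ((qpair j).2 : ℝ) then
    (mach M B ((qpair j).1 : ℝ) ((qpair j).2 : ℝ) (2 ^ (j + 2)) (j + 1) n s).1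
  else 1

open scoped Classical in
/-- Stake of the `j`-th component machine. -/
noncomputable def Hp (M : ∀ n, Sit 𝒳 n → ℝ) (B : ℝ) (j n : ℕ) (s : Sit 𝒳 n) : ℝ :=
  if B < ((qpair j).1 : ℝ) ∧ ((qpair j).1 : ℝ) < ((qpair j).2 : ℝ) then
    (mach M B ((qpair j).1 : ℝ) ((qpair j).2 : ℝ) (2 ^ (j + 2)) (j + 1) n s).2.1
  else 0

theorem Kp_nonneg (M : ∀ n, Sit 𝒳 n → ℝ) (B : ℝ) (hB : ∀ n s, B ≤ M n s)
    (j n : ℕ) (s : Sit 𝒳 n) : 0 ≤ Kp M B j n s := by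
  unfold Kp
  split_ifs with h
  · exact mach_fst_nonneg M B _ _ _ _ hB h.1 n s
  · norm_num

theorem Hp_nonneg (M : ∀ n, Sit 𝒳 n → ℝ) (B : ℝ) (hB : ∀ n s, B ≤ M n s)
    (j n : ℕ) (s : Sit 𝒳 n) : 0 ≤ Hp M B j n s := by
  unfold Hp
  split_ifs with h
  · exact (mach_inv M B _ _ _ _ hB h.1 n s).1
  · norm_num

theorem Kp_last (M : ∀ n, Sit 𝒳 n → ℝ) (B : ℝ) (n : ℕ) (s : Sit 𝒳 (n + 1)) :
    Kp M B n (n + 1) s = 1 := by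
  unfold Kp
  split_ifs with h
  · exact mach_fst_le_delay M B _ _ _ _ (n + 1) s (le_refl _)
  · rfl

theorem Kp_step (M : ∀ n, Sit 𝒳 n → ℝ) (B : ℝ) (j n : ℕ) (s : Sit 𝒳 n) (x : 𝒳 n) :
    Kp M B j (n + 1) (snoc s x) =
      Kp M B j n s + Hp M B j n s * (M (n + 1) (snoc s x) - M n s) := by
  unfold Kp Hp
  split_ifs with h
  · show (machStep B _ _ _ (j+1) n
        (mach M B _ _ _ (j+1) n (trunc (snoc s x) n (Nat.le_succ n)))
        (M n (trunc (snoc s x) n (Nat.le_succ n))) (M (n + 1) (snoc s x))).1 = _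
    rw [machStep_fst, trunc_snoc]
  · ring

/-- The combined test supermartingale. -/
noncomputable def TT (M : ∀ n, Sit 𝒳 n → ℝ) (B : ℝ) : ∀ n, Sit 𝒳 n → ℝ := fun n s =>
  2⁻¹ * ((M n s - B + 1) / (M 0 emptySit - B + 1))
    + (∑ j ∈ Finset.range n, (2:ℝ)⁻¹ ^ (j + 2) * Kp M B j n s) + 2⁻¹ ^ (n + 1)

theorem TT_step (M : ∀ n, Sit 𝒳 n → ℝ) (B : ℝ) (n : ℕ) (s : Sit 𝒳 n) (x : 𝒳 n) :
    TT M B (n + 1) (snoc s x) - TT M B n s =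
      (2⁻¹ / (M 0 emptySit - B + 1)
        + ∑ j ∈ Finset.range n, (2:ℝ)⁻¹ ^ (j + 2) * Hp M B j n s)
        * (M (n + 1) (snoc s x) - M n s) := by
  unfold TT
  rw [Finset.sum_range_succ, Kp_last]
  have hsum : ∀ j ∈ Finset.range n, (2:ℝ)⁻¹ ^ (j + 2) * Kp M B j (n + 1) (snoc s x)
      = (2:ℝ)⁻¹ ^ (j + 2) * Kp M B j n s
        + ((2:ℝ)⁻¹ ^ (j + 2) * Hp M B j n s) * (M (n + 1) (snoc s x) - M n s) := by
    intro j _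
    rw [Kp_step]; ring
  rw [Finset.sum_congr rfl hsum, Finset.sum_add_distrib, ← Finset.sum_mul]
  have hpow : ((2:ℝ)⁻¹) ^ (n + 1 + 1) = (2:ℝ)⁻¹ ^ (n + 1) * 2⁻¹ := pow_succ _ _
  rw [hpow]
  field_simp
  ring

theorem TT_nonneg (M : ∀ n, Sit 𝒳 n → ℝ) (B : ℝ) (hB : ∀ n s, B ≤ M n s)
    (n : ℕ) (s : Sit 𝒳 n) : 0 ≤ TT M B n s := by
  have h0 : (0:ℝ) < M 0 emptySit - B + 1 := by have := hB 0 emptySit; linarith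
  have h1 : (0:ℝ) ≤ 2⁻¹ * ((M n s - B + 1) / (M 0 emptySit - B + 1)) := by
    have := hB n s
    exact mul_nonneg (by norm_num) (div_nonneg (by linarith) h0.le)
  have h2 : (0:ℝ) ≤ ∑ j ∈ Finset.range n, (2:ℝ)⁻¹ ^ (j + 2) * Kp M B j n s :=
    Finset.sum_nonneg fun j _ => mul_nonneg (by positivity) (Kp_nonneg M B hB j n s)
  have h3 : (0:ℝ) ≤ (2:ℝ)⁻¹ ^ (n + 1) := by positivity
  unfold TT
  linarith

theorem TT_one (M : ∀ n, Sit 𝒳 n → ℝ) (B : ℝ) (hB : ∀ n s, B ≤ M n s) :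
    TT M B 0 emptySit = 1 := by
  have h0 : M 0 emptySit - B + 1 ≠ 0 := by have := hB 0 emptySit; intro hc; linarith
  unfold TT
  rw [Finset.range_zero, Finset.sum_empty, div_self h0]
  norm_num

theorem TT_ge_sum (M : ∀ n, Sit 𝒳 n → ℝ) (B : ℝ) (hB : ∀ n s, B ≤ M n s)
    (n : ℕ) (s : Sit 𝒳 n) (F : Finset ℕ) (hF : F ⊆ Finset.range n) :
    (∑ j ∈ F, (2:ℝ)⁻¹ ^ (j + 2) * Kp M B j n s) ≤ TT M B n s := by
  have h0 : (0:ℝ) < M 0 emptySit - B + 1 := by have := hB 0 emptySit; linarith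
  have h1 : (0:ℝ) ≤ 2⁻¹ * ((M n s - B + 1) / (M 0 emptySit - B + 1)) := by
    have := hB n s
    exact mul_nonneg (by norm_num) (div_nonneg (by linarith) h0.le)
  have h2 : (∑ j ∈ F, (2:ℝ)⁻¹ ^ (j + 2) * Kp M B j n s) ≤
      ∑ j ∈ Finset.range n, (2:ℝ)⁻¹ ^ (j + 2) * Kp M B j n s :=
    Finset.sum_le_sum_of_subset_of_nonneg hF fun j _ _ =>
      mul_nonneg (by positivity) (Kp_nonneg M B hB j n s)
  have h3 : (0:ℝ) ≤ (2:ℝ)⁻¹ ^ (n + 1) := by positivity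
  unfold TT
  linarith

theorem TT_ge_S (M : ∀ n, Sit 𝒳 n → ℝ) (B : ℝ) (hB : ∀ n s, B ≤ M n s)
    (n : ℕ) (s : Sit 𝒳 n) :
    2⁻¹ * ((M n s - B + 1) / (M 0 emptySit - B + 1)) ≤ TT M B n s := by
  have h2 : (0:ℝ) ≤ ∑ j ∈ Finset.range n, (2:ℝ)⁻¹ ^ (j + 2) * Kp M B j n s :=
    Finset.sum_nonneg fun j _ => mul_nonneg (by positivity) (Kp_nonneg M B hB j n s)
  have h3 : (0:ℝ) ≤ (2:ℝ)⁻¹ ^ (n + 1) := by positivity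
  unfold TT
  linarith

theorem TT_supermartingale [∀ n, Fintype (𝒳 n)] [∀ n, Nonempty (𝒳 n)]
    (Q : ∀ n, Sit 𝒳 n → (𝒳 n → ℝ) → ℝ) (hQ : ∀ n s, IsLE (Q n s))
    (M : ∀ n, Sit 𝒳 n → ℝ) (hM : IsSupermartingale Q M)
    (B : ℝ) (hB : ∀ n s, B ≤ M n s) :
    IsSupermartingale Q (TT M B) := by
  intro n s
  have h0 : (0:ℝ) < M 0 emptySit - B + 1 := by have := hB 0 emptySit; linarith
  set C : ℝ := 2⁻¹ / (M 0 emptySit - B + 1)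
      + ∑ j ∈ Finset.range n, (2:ℝ)⁻¹ ^ (j + 2) * Hp M B j n s with hCdef
  have hC : 0 ≤ C := by
    rw [hCdef]
    have h1 : (0:ℝ) ≤ 2⁻¹ / (M 0 emptySit - B + 1) := by positivity
    have h2 : (0:ℝ) ≤ ∑ j ∈ Finset.range n, (2:ℝ)⁻¹ ^ (j + 2) * Hp M B j n s :=
      Finset.sum_nonneg fun j _ => mul_nonneg (by positivity) (Hp_nonneg M B hB j n s)
    linarith
  have hfe : (fun x => -TT M B (n + 1) (snoc s x) - -TT M B n s)
      = fun x => C * (-M (n + 1) (snoc s x) - -M n s) := by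
    funext x
    have h := TT_step M B n s x
    rw [hCdef]
    linear_combination -h
  rw [hfe, (hQ n s).2.2 _ C hC]
  exact mul_nonneg hC (hM n s)
end SMC

/-- Supermartingale convergence theorem. -/
theorem supermartingale_convergence {𝒳 : ℕ → Type} [∀ n, Fintype (𝒳 n)] [∀ n, Nonempty (𝒳 n)]
    (Q : ∀ n, Sit 𝒳 n → (𝒳 n → ℝ) → ℝ) (hQ : ∀ n s, IsLE (Q n s))
    (M : ∀ n, Sit 𝒳 n → ℝ) (hM : IsSupermartingale Q M)
    (B : ℝ) (hB : ∀ (n : ℕ) (s : Sit 𝒳 n), B ≤ M n s) :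
    StrictlyNull Q
      {ω : Path 𝒳 | ¬ ∃ L : ℝ, Tendsto (fun n : ℕ => M n (res ω n)) atTop (nhds L)} := by
  refine ⟨TT M B, ⟨TT_supermartingale Q hQ M hM B hB, TT_nonneg M B hB, TT_one M B hB⟩, ?_⟩
  intro ω hω
  simp only [Set.mem_setOf_eq] at hω
  set u : ℕ → ℝ := fun n => M n (res ω n) with hudef
  have h0 : (0:ℝ) < M 0 emptySit - B + 1 := by have := hB 0 emptySit; linarith
  by_cases htop : Tendsto u atTop atTop
  · -- `M` tends to `+∞` along `ω`; the (1/2)·S part of `TT` does the job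
    have h2 : Tendsto (fun n => u n - B + 1) atTop atTop := by
      have := tendsto_atTop_add_const_right atTop (-B + 1) htop
      refine this.congr fun n => by ring
    have h1 : Tendsto (fun n => 2⁻¹ * ((u n - B + 1) / (M 0 emptySit - B + 1)))
        atTop atTop :=
      (h2.atTop_div_const h0).const_mul_atTop (by norm_num : (0:ℝ) < 2⁻¹)
    exact tendsto_atTop_mono (fun n => TT_ge_S M B hB n (res ω n)) h1
  · -- oscillation case
    have hosc : ∃ c₁, ∃ᶠ n in atTop, u n < c₁ := by
      by_contra hcon
      push_neg at hcon
      apply htop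
      rw [tendsto_atTop]
      intro c
      have := hcon c
      exact this
    obtain ⟨c₁, hc₁⟩ := hosc
    set A : Set ℝ := {c | ∃ᶠ n in atTop, u n < c} with hAdef
    have hA_ne : A.Nonempty := ⟨c₁, hc₁⟩
    have hBlb : ∀ c ∈ A, B ≤ c := by
      intro c hc
      obtain ⟨n, -, hn⟩ := (frequently_atTop.mp hc) 0
      exact le_of_lt (lt_of_le_of_lt (hB n (res ω n)) hn)
    have hA_bdd : BddBelow A := ⟨B, hBlb⟩
    set l := sInf A with hldef
    have hBl : B ≤ l := le_csInf hA_ne hBlb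
    by_cases hup : ∃ c', l < c' ∧ ∃ᶠ n in atTop, c' < u n
    · obtain ⟨c', hlc', hfc'⟩ := hup
      obtain ⟨aq, hla, hac'⟩ := exists_rat_btwn hlc'
      obtain ⟨bq, hab', hbc'⟩ := exists_rat_btwn hac'
      have hfa : ∃ᶠ n in atTop, u n < (aq:ℝ) := by
        obtain ⟨c, hcA, hca⟩ := exists_lt_of_csInf_lt hA_ne hla
        exact hcA.mono fun n h => lt_trans h hca
      have hfb : ∃ᶠ n in atTop, (bq:ℝ) < u n := hfc'.mono fun n h => lt_trans hbc' h
      have hBa : B < (aq:ℝ) := lt_of_le_of_lt hBl hla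
      have habR : ((aq:ℝ)) < (bq:ℝ) := hab'
      rw [tendsto_atTop]
      intro R
      obtain ⟨N, hNR⟩ := exists_nat_ge R
      obtain ⟨k, hqk⟩ : ∃ k, (Denumerable.eqv (ℚ × ℚ)).symm k = (aq, bq) :=
        ⟨Denumerable.eqv (ℚ × ℚ) (aq, bq), Equiv.symm_apply_apply _ _⟩
      set F : Finset ℕ := (Finset.range N).image (fun m => Nat.pair k m) with hFdef
      have hcard : F.card = N := by
        rw [hFdef, Finset.card_image_of_injective _
          (fun m₁ m₂ h => (Nat.pair_eq_pair.mp h).2), Finset.card_range]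
      have hqpair : ∀ j ∈ F, qpair j = (aq, bq) := by
        intro j hj
        rw [hFdef] at hj
        obtain ⟨m, -, rfl⟩ := Finset.mem_image.mp hj
        unfold qpair
        rw [Nat.unpair_pair]
        exact hqk
      have hev : ∀ j ∈ F, ∀ᶠ n in atTop, 1 ≤ (2:ℝ)⁻¹ ^ (j + 2) * Kp M B j n (res ω n) := by
        intro j hj
        have hg := pmach_growth B (aq:ℝ) (bq:ℝ) (2 ^ (j + 2)) (j + 1) u hBa habR
          (one_lt_pow₀ (by norm_num) (by omega)) (by omega) hfa hfb
        filter_upwards [hg] with n hn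
        have hKeq : Kp M B j n (res ω n)
            = (pmach B (aq:ℝ) (bq:ℝ) (2 ^ (j + 2)) (j + 1) u n).1 := by
          unfold Kp
          rw [hqpair j hj]
          rw [if_pos ⟨hBa, habR⟩]
          exact congrArg Prod.fst (mach_res M B _ _ _ _ ω n)
        rw [hKeq]
        calc (1:ℝ) = (2:ℝ)⁻¹ ^ (j + 2) * 2 ^ (j + 2) := by
              rw [← mul_pow]; norm_num
          _ ≤ _ := mul_le_mul_of_nonneg_left hn (by positivity)
      have hall : ∀ᶠ n in atTop, ∀ j ∈ F, 1 ≤ (2:ℝ)⁻¹ ^ (j + 2) * Kp M B j n (res ω n) :=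
        (eventually_all_finset F).mpr hev
      have hbig : ∀ᶠ n in atTop, ∀ j ∈ F, j < n := by
        filter_upwards [eventually_gt_atTop (F.sup id)] with n hn j hj
        exact lt_of_le_of_lt (Finset.le_sup (f := id) hj) hn
      filter_upwards [hall, hbig] with n h1 h2
      have hsub : F ⊆ Finset.range n := fun j hj => Finset.mem_range.mpr (h2 j hj)
      have hN : (N:ℝ) ≤ ∑ j ∈ F, (2:ℝ)⁻¹ ^ (j + 2) * Kp M B j n (res ω n) := by
        calc (N:ℝ) = ∑ _j ∈ F, (1:ℝ) := by rw [Finset.sum_const, hcard]; simp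
          _ ≤ _ := Finset.sum_le_sum h1
      have h4 := TT_ge_sum M B hB n (res ω n) F hsub
      linarith
    · exfalso
      push_neg at hup
      apply hω
      refine ⟨l, Metric.tendsto_nhds.mpr ?_⟩
      intro ε hε
      have hupper : ∀ᶠ n in atTop, u n ≤ l + ε / 2 := by
        have h5 := hup (l + ε / 2) (by linarith)
        exact h5
      have hlower : ∀ᶠ n in atTop, l - ε / 2 ≤ u n := by
        have hnotA : (l - ε / 2) ∉ A := by
          intro hmem
          have h6 := csInf_le hA_bdd hmem
          rw [← hldef] at h6
          linarith
        have h7 : ¬ ∃ᶠ n in atTop, u n < l - ε / 2 := hnotA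
        rw [not_frequently] at h7
        exact h7.mono fun n h => not_lt.mp h
      filter_upwards [hupper, hlower] with n h1 h2
      rw [Real.dist_eq, abs_lt]
      constructor <;> linarith

end IP
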